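/- Theorem 0.5 (Strachan's sufficient condition). Given a Frobenius structure in flat coordinates on U ⊆ ℂ^m and a submanifold datum ι : W → U such that the induced metric on N = ι(W) is flat, if e ∈ T_pN and E(p) ∈ T_pN for every p ∈ N, and T_pN ∘_p T_pN ⊆ T_pN for every p ∈ N, then N is a natural Frobenius submanifold. -/

import Mathlib

open scoped BigOperators

noncomputable section

/-- A Frobenius structure in flat coordinates on a connected open set `U ⊆ ℂ^m`:
a nondegenerate symmetric bilinear form, a holomorphic family of commutative
associative invariant products with constant unit `e`, potentiality, and a
holomorphic Euler field `E` with constant `Dconst`. The ambient Levi-Civita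
connection is the directional derivative. -/
structure FrobeniusStructure (m : ℕ) where
  U : Set (Fin m → ℂ)
  U_open : IsOpen U
  U_conn : IsConnected U
  g : (Fin m → ℂ) →ₗ[ℂ] (Fin m → ℂ) →ₗ[ℂ] ℂ
  g_symm : ∀ x y, g x y = g y x
  g_nondeg : ∀ x, (∀ y, g x y = 0) → x = 0
  mul : (Fin m → ℂ) → (Fin m → ℂ) →ₗ[ℂ] (Fin m → ℂ) →ₗ[ℂ] (Fin m → ℂ)
  mul_holo : ∀ x y, DifferentiableOn ℂ (fun p => mul p x y) U
  mul_comm : ∀ p x y, mul p x y = mul p y x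
  mul_assoc : ∀ p x y z, mul p (mul p x y) z = mul p x (mul p y z)
  g_invariant : ∀ p x y z, g (mul p x y) z = g x (mul p y z)
  e : Fin m → ℂ
  e_unit : ∀ p x, mul p e x = x
  potential : ∀ p ∈ U, ∀ w x y z : Fin m → ℂ,
    fderiv ℂ (fun q => g (mul q x y) z) p w = fderiv ℂ (fun q => g (mul q w y) z) p x
  E : (Fin m → ℂ) → (Fin m → ℂ)
  E_holo : DifferentiableOn ℂ E U
  Dconst : ℂ
  euler_metric : ∀ p ∈ U, ∀ x y : Fin m → ℂ,
    g (fderiv ℂ E p x) y + g x (fderiv ℂ E p y) = Dconst * g x y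
  euler_prod : ∀ p ∈ U, ∀ x y : Fin m → ℂ,
    fderiv ℂ (fun q => mul q x y) p (E p) - fderiv ℂ E p (mul p x y)
      + mul p (fderiv ℂ E p x) y + mul p x (fderiv ℂ E p y) = mul p x y

/-- A submanifold datum: a holomorphic embedding `emb : W → U` of a connected
open set `W ⊆ ℂ^n`, with everywhere injective differential, such that the
metric restricted to the tangent spaces `T_pN = range (D emb)_w` is
nondegenerate; `pr w` is the `g`-orthogonal projection onto the tangent space. -/
structure SubmanifoldDatum (m n : ℕ) (F : FrobeniusStructure m) where
  W : Set (Fin n → ℂ)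
  W_open : IsOpen W
  W_conn : IsConnected W
  emb : (Fin n → ℂ) → (Fin m → ℂ)
  emb_holo : DifferentiableOn ℂ emb W
  emb_maps : ∀ w ∈ W, emb w ∈ F.U
  emb_inj : Set.InjOn emb W
  demb_inj : ∀ w ∈ W, Function.Injective (fderiv ℂ emb w)
  pr : (Fin n → ℂ) → (Fin m → ℂ) →ₗ[ℂ] (Fin m → ℂ)
  pr_mem : ∀ w ∈ W, ∀ x, pr w x ∈ Set.range (fderiv ℂ emb w)
  pr_fix : ∀ w ∈ W, ∀ x ∈ Set.range (fderiv ℂ emb w), pr w x = x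
  pr_orth : ∀ w ∈ W, ∀ x : Fin m → ℂ, ∀ y ∈ Set.range (fderiv ℂ emb w),
    F.g (x - pr w x) y = 0
  g_nondeg_tangent : ∀ w ∈ W, ∀ x ∈ Set.range (fderiv ℂ emb w),
    (∀ y ∈ Set.range (fderiv ℂ emb w), F.g x y = 0) → x = 0

namespace SubmanifoldDatum

variable {m n : ℕ} {F : FrobeniusStructure m}

/-- The tangent space `T_pN` at `p = emb w`. -/
def T (S : SubmanifoldDatum m n F) (w : Fin n → ℂ) : Set (Fin m → ℂ) :=
  Set.range (fderiv ℂ S.emb w)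

open Classical in
/-- The coordinate vector mapped by `(D emb)_w` to a tangent vector `v`
(junk value `0` if `v` is not tangent). -/
def lift (S : SubmanifoldDatum m n F) (w : Fin n → ℂ) (v : Fin m → ℂ) : Fin n → ℂ :=
  if h : v ∈ Set.range (fderiv ℂ S.emb w) then h.choose else 0

/-- A tangent field: a holomorphic map `W → ℂ^m` with values in the tangent spaces. -/
def IsTangentField (S : SubmanifoldDatum m n F) (X : (Fin n → ℂ) → (Fin m → ℂ)) : Prop :=
  DifferentiableOn ℂ X S.W ∧ ∀ w ∈ S.W, X w ∈ S.T w

/-- `D_X Y`: the derivative of `Y` in the coordinate direction mapped by `D emb` to `X`. -/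
def covD (S : SubmanifoldDatum m n F) (X Y : (Fin n → ℂ) → (Fin m → ℂ)) :
    (Fin n → ℂ) → (Fin m → ℂ) :=
  fun w => fderiv ℂ Y w (S.lift w (X w))

/-- The induced (Levi-Civita) connection `∇_X Y := pr (D_X Y)`. -/
def nabla (S : SubmanifoldDatum m n F) (X Y : (Fin n → ℂ) → (Fin m → ℂ)) :
    (Fin n → ℂ) → (Fin m → ℂ) :=
  fun w => S.pr w (S.covD X Y w)

/-- The second fundamental form `h(X,Y) := (D_X Y)^⊥`. -/
def sff (S : SubmanifoldDatum m n F) (X Y : (Fin n → ℂ) → (Fin m → ℂ)) :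
    (Fin n → ℂ) → (Fin m → ℂ) :=
  fun w => S.covD X Y w - S.pr w (S.covD X Y w)

/-- The shape operator `A_Ξ X := - pr (D_X Ξ)` of a normal field `Ξ`. -/
def shape (S : SubmanifoldDatum m n F) (Xi X : (Fin n → ℂ) → (Fin m → ℂ)) :
    (Fin n → ℂ) → (Fin m → ℂ) :=
  fun w => - S.pr w (S.covD X Xi w)

/-- The Lie bracket of tangent fields. -/
def bracket (S : SubmanifoldDatum m n F) (X Y : (Fin n → ℂ) → (Fin m → ℂ)) :
    (Fin n → ℂ) → (Fin m → ℂ) :=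
  fun w => S.covD X Y w - S.covD Y X w

/-- `e_N := pr e`, the tangential part of the unit field. -/
def eN (S : SubmanifoldDatum m n F) : (Fin n → ℂ) → (Fin m → ℂ) :=
  fun w => S.pr w F.e

/-- `E_N := pr (E ∘ emb)`, the tangential part of the Euler field. -/
def EN (S : SubmanifoldDatum m n F) : (Fin n → ℂ) → (Fin m → ℂ) :=
  fun w => S.pr w (F.E (S.emb w))

/-- `E_N^⊥ := E ∘ emb - E_N`, the normal part of the Euler field. -/
def ENperp (S : SubmanifoldDatum m n F) : (Fin n → ℂ) → (Fin m → ℂ) :=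
  fun w => F.E (S.emb w) - S.pr w (F.E (S.emb w))

/-- The induced product `X * Y := pr (X ∘ Y)`. -/
def star (S : SubmanifoldDatum m n F) (X Y : (Fin n → ℂ) → (Fin m → ℂ)) :
    (Fin n → ℂ) → (Fin m → ℂ) :=
  fun w => S.pr w (F.mul (S.emb w) (X w) (Y w))

/-- The induced metric is flat: the curvature of `∇` vanishes. -/
def FlatInduced (S : SubmanifoldDatum m n F) : Prop :=
  ∀ X Y Z, S.IsTangentField X → S.IsTangentField Y → S.IsTangentField Z →
    ∀ w ∈ S.W,
      S.nabla X (S.nabla Y Z) w - S.nabla Y (S.nabla X Z) w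
        - S.nabla (S.bracket X Y) Z w = 0

/-- The tangent spaces are closed under the ambient product:
`T_pN ∘_p T_pN ⊆ T_pN`. -/
def ClosedUnderMul (S : SubmanifoldDatum m n F) : Prop :=
  ∀ w ∈ S.W, ∀ x ∈ S.T w, ∀ y ∈ S.T w, F.mul (S.emb w) x y ∈ S.T w

/-- The covariant derivative 4-tensor
`(X', X, Y, Z) ↦ X'⟨X*Y, Z⟩ − ⟨(∇_{X'}X)*Y, Z⟩ − ⟨X*(∇_{X'}Y), Z⟩ − ⟨X*Y, ∇_{X'}Z⟩`. -/
def ctensor (S : SubmanifoldDatum m n F) (X' X Y Z : (Fin n → ℂ) → (Fin m → ℂ)) :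
    (Fin n → ℂ) → ℂ :=
  fun w => fderiv ℂ (fun v => F.g (S.star X Y v) (Z v)) w (S.lift w (X' w))
    - F.g (S.star (S.nabla X' X) Y w) (Z w)
    - F.g (S.star X (S.nabla X' Y) w) (Z w)
    - F.g (S.star X Y w) (S.nabla X' Z w)

/-- `N` is a Frobenius submanifold: the induced data satisfy the Frobenius
manifold axioms. -/
structure IsFrobeniusSub (S : SubmanifoldDatum m n F) : Prop where
  nabla_flat : S.FlatInduced
  star_comm : ∀ X Y, S.IsTangentField X → S.IsTangentField Y →
    ∀ w ∈ S.W, S.star X Y w = S.star Y X w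
  star_assoc : ∀ X Y Z, S.IsTangentField X → S.IsTangentField Y → S.IsTangentField Z →
    ∀ w ∈ S.W, S.star (S.star X Y) Z w = S.star X (S.star Y Z) w
  star_unit : ∀ X, S.IsTangentField X → ∀ w ∈ S.W, S.star X S.eN w = X w
  eN_flat : ∀ X, S.IsTangentField X → ∀ w ∈ S.W, S.nabla X S.eN w = 0
  star_invariant : ∀ X Y Z, S.IsTangentField X → S.IsTangentField Y → S.IsTangentField Z →
    ∀ w ∈ S.W, F.g (S.star X Y w) (Z w) = F.g (X w) (S.star Y Z w)
  potential_symm : ∀ X' X Y Z, S.IsTangentField X' → S.IsTangentField X →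
      S.IsTangentField Y → S.IsTangentField Z → ∀ w ∈ S.W,
    S.ctensor X' X Y Z w = S.ctensor X X' Y Z w ∧
    S.ctensor X' X Y Z w = S.ctensor X' Y X Z w ∧
    S.ctensor X' X Y Z w = S.ctensor X' X Z Y w
  euler_metric : ∃ DN : ℂ, ∀ X Y, S.IsTangentField X → S.IsTangentField Y →
    ∀ w ∈ S.W, F.g (S.nabla X S.EN w) (Y w) + F.g (X w) (S.nabla Y S.EN w)
      = DN * F.g (X w) (Y w)
  euler_prod : ∀ X Y, S.IsTangentField X → S.IsTangentField Y → ∀ w ∈ S.W,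
    S.nabla X (S.star Y S.EN) w - S.star (S.nabla X Y) S.EN w
      + S.star X (S.nabla Y S.EN) w - S.nabla (S.star X Y) S.EN w = S.star X Y w

/-- `N` is a natural Frobenius submanifold: a Frobenius submanifold whose
tangent spaces are closed under the ambient product. -/
def IsNaturalFrobeniusSub (S : SubmanifoldDatum m n F) : Prop :=
  S.IsFrobeniusSub ∧ S.ClosedUnderMul

end SubmanifoldDatum

section StrachanHelpers

variable {m n : ℕ}

private lemma pi_single_eq_smul (a : Fin m → ℂ) (i : Fin m) :
    Pi.single i (a i) = a i • (Pi.single i 1 : Fin m → ℂ) := by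
  ext j
  rcases eq_or_ne j i with h | h
  · subst h; simp
  · simp [Pi.single_eq_of_ne h]

private lemma bilin_expand {M' : Type*} [AddCommGroup M'] [Module ℂ M']
    (B : (Fin m → ℂ) →ₗ[ℂ] (Fin m → ℂ) →ₗ[ℂ] M') (a b : Fin m → ℂ) :
    B a b = ∑ i, ∑ j, a i • b j • B (Pi.single i 1) (Pi.single j 1) := by
  conv_lhs => rw [← Finset.univ_sum_single a]
  rw [map_sum, LinearMap.sum_apply]
  refine Finset.sum_congr rfl fun i _ => ?_
  conv_lhs => rw [← Finset.univ_sum_single b]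
  rw [map_sum]
  refine Finset.sum_congr rfl fun j _ => ?_
  rw [pi_single_eq_smul a i, pi_single_eq_smul b j, map_smul, map_smul, LinearMap.smul_apply,
    smul_comm]

private def gCLM (F : FrobeniusStructure m) : (Fin m → ℂ) →L[ℂ] (Fin m → ℂ) →L[ℂ] ℂ :=
  LinearMap.toContinuousLinearMap
    { toFun := fun x => LinearMap.toContinuousLinearMap (F.g x)
      map_add' := by intro x y; ext z; simp
      map_smul' := by intro c x; ext z; simp }

private lemma gCLM_apply (F : FrobeniusStructure m) (x y : Fin m → ℂ) :
    gCLM F x y = F.g x y := rfl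

private lemma fderiv_gpair {E' : Type*} [NormedAddCommGroup E'] [NormedSpace ℂ E']
    (F : FrobeniusStructure m) {H Z : E' → (Fin m → ℂ)} {w : E'}
    (hH : DifferentiableAt ℂ H w) (hZ : DifferentiableAt ℂ Z w) (u : E') :
    fderiv ℂ (fun v => F.g (H v) (Z v)) w u
      = F.g (fderiv ℂ H w u) (Z w) + F.g (H w) (fderiv ℂ Z w u) := by
  have hc : HasFDerivAt (fun v => gCLM F (H v)) (((gCLM F).comp (fderiv ℂ H w))) w :=
    ((gCLM F).hasFDerivAt.comp w hH.hasFDerivAt)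
  have h := hc.clm_apply hZ.hasFDerivAt
  have h2 : fderiv ℂ (fun v => F.g (H v) (Z v)) w
      = ((gCLM F (H w)).comp (fderiv ℂ Z w)
          + ((gCLM F).comp (fderiv ℂ H w)).flip (Z w)) := h.fderiv
  rw [h2]
  simp [gCLM_apply, add_comm]

private lemma fderiv_mulq_expand (F : FrobeniusStructure m) {p : Fin m → ℂ} (hp : p ∈ F.U)
    (a b : Fin m → ℂ) :
    fderiv ℂ (fun q => F.mul q a b) p
      = ∑ i, ∑ j, a i • b j • fderiv ℂ (fun q => F.mul q (Pi.single i 1) (Pi.single j 1)) p := by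
  have hd : ∀ i j : Fin m, DifferentiableAt ℂ
      (fun q => F.mul q (Pi.single i 1) (Pi.single j 1)) p :=
    fun i j => (F.mul_holo _ _).differentiableAt (F.U_open.mem_nhds hp)
  have hfun : (fun q => F.mul q a b)
      = fun q => ∑ i, ∑ j, a i • b j • F.mul q (Pi.single i 1) (Pi.single j 1) :=
    funext fun q => bilin_expand (F.mul q) a b
  rw [hfun, fderiv_fun_sum (A := fun i q => ∑ j, a i • b j • F.mul q (Pi.single i 1) (Pi.single j 1)) (fun i _ =>
    DifferentiableAt.fun_sum (A := fun j q => a i • b j • F.mul q (Pi.single i 1) (Pi.single j 1)) (fun j _ => ((hd i j).const_smul (b j)).const_smul (a i)))]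
  refine Finset.sum_congr rfl fun i _ => ?_
  rw [fderiv_fun_sum (A := fun j q => a i • b j • F.mul q (Pi.single i 1) (Pi.single j 1)) (fun j _ => ((hd i j).const_smul (b j)).const_smul (a i))]
  refine Finset.sum_congr rfl fun j _ => ?_
  rw [fderiv_fun_const_smul (f := fun q => b j • F.mul q (Pi.single i 1) (Pi.single j 1)) (((hd i j).const_smul (b j))) (a i), fderiv_fun_const_smul (hd i j) (b j)]

private lemma fderiv_g_mulq (F : FrobeniusStructure m) {p : Fin m → ℂ} (hp : p ∈ F.U)
    (a b z v : Fin m → ℂ) :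
    fderiv ℂ (fun q => F.g (F.mul q a b) z) p v
      = F.g (fderiv ℂ (fun q => F.mul q a b) p v) z := by
  have hd : DifferentiableAt ℂ (fun q => F.mul q a b) p :=
    (F.mul_holo a b).differentiableAt (F.U_open.mem_nhds hp)
  have hz : DifferentiableAt ℂ (fun _ : Fin m → ℂ => z) p := differentiableAt_const z
  have h := fderiv_gpair F hd hz v
  rw [h, (hasFDerivAt_const z p).fderiv]
  simp

end StrachanHelpers
section StrachanHelpers2

open SubmanifoldDatum

variable {m n : ℕ} {F : FrobeniusStructure m}

private lemma lift_spec (S : SubmanifoldDatum m n F) {w : Fin n → ℂ} {v : Fin m → ℂ}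
    (hv : v ∈ S.T w) : fderiv ℂ S.emb w (S.lift w v) = v := by
  rw [SubmanifoldDatum.lift, dif_pos (show v ∈ Set.range (fderiv ℂ S.emb w) from hv)]
  exact (show v ∈ Set.range (fderiv ℂ S.emb w) from hv).choose_spec

private lemma T_add (S : SubmanifoldDatum m n F) {w : Fin n → ℂ} {x y : Fin m → ℂ}
    (hx : x ∈ S.T w) (hy : y ∈ S.T w) : x + y ∈ S.T w := by
  obtain ⟨a, ha⟩ := hx; obtain ⟨b, hb⟩ := hy
  exact ⟨a + b, by rw [map_add, ha, hb]⟩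

private lemma T_sub (S : SubmanifoldDatum m n F) {w : Fin n → ℂ} {x y : Fin m → ℂ}
    (hx : x ∈ S.T w) (hy : y ∈ S.T w) : x - y ∈ S.T w := by
  obtain ⟨a, ha⟩ := hx; obtain ⟨b, hb⟩ := hy
  exact ⟨a - b, by rw [map_sub, ha, hb]⟩

private lemma g_pr_left (S : SubmanifoldDatum m n F) {w : Fin n → ℂ} (hw : w ∈ S.W)
    (v : Fin m → ℂ) {z : Fin m → ℂ} (hz : z ∈ S.T w) :
    F.g (S.pr w v) z = F.g v z := by
  have h := S.pr_orth w hw v z hz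
  rw [map_sub, LinearMap.sub_apply] at h
  have := sub_eq_zero.mp h
  exact this.symm

private lemma g_pr_right (S : SubmanifoldDatum m n F) {w : Fin n → ℂ} (hw : w ∈ S.W)
    (v : Fin m → ℂ) {z : Fin m → ℂ} (hz : z ∈ S.T w) :
    F.g z (S.pr w v) = F.g z v := by
  rw [F.g_symm, g_pr_left S hw v hz, F.g_symm]

/-- Derivative formula for `v ↦ mul (emb v) (A v) (B v)`. -/
private lemma mulField_fderiv (S : SubmanifoldDatum m n F)
    {w : Fin n → ℂ} (hw : w ∈ S.W)
    {A B : (Fin n → ℂ) → (Fin m → ℂ)}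
    (hA : DifferentiableAt ℂ A w) (hB : DifferentiableAt ℂ B w) :
    DifferentiableAt ℂ (fun v => F.mul (S.emb v) (A v) (B v)) w ∧
    ∀ u, fderiv ℂ (fun v => F.mul (S.emb v) (A v) (B v)) w u
      = fderiv ℂ (fun q => F.mul q (A w) (B w)) (S.emb w) (fderiv ℂ S.emb w u)
        + F.mul (S.emb w) (fderiv ℂ A w u) (B w)
        + F.mul (S.emb w) (A w) (fderiv ℂ B w u) := by
  have hembd : DifferentiableAt ℂ S.emb w := S.emb_holo.differentiableAt (S.W_open.mem_nhds hw)
  have hemb : HasFDerivAt S.emb (fderiv ℂ S.emb w) w := hembd.hasFDerivAt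
  have hp : S.emb w ∈ F.U := S.emb_maps w hw
  have hG : ∀ i j : Fin m, HasFDerivAt
      (fun v => F.mul (S.emb v) (Pi.single i 1) (Pi.single j 1))
      ((fderiv ℂ (fun q => F.mul q (Pi.single i 1) (Pi.single j 1)) (S.emb w)).comp
        (fderiv ℂ S.emb w)) w := by
    intro i j
    have hq : DifferentiableAt ℂ (fun q => F.mul q (Pi.single i 1) (Pi.single j 1)) (S.emb w) :=
      (F.mul_holo _ _).differentiableAt (F.U_open.mem_nhds hp)
    exact hq.hasFDerivAt.comp w hemb
  have hAi : ∀ i : Fin m, HasFDerivAt (fun v => A v i)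
      ((ContinuousLinearMap.proj i).comp (fderiv ℂ A w)) w := fun i =>
    (ContinuousLinearMap.proj i :
      (Fin m → ℂ) →L[ℂ] ℂ).hasFDerivAt.comp w hA.hasFDerivAt
  have hBj : ∀ j : Fin m, HasFDerivAt (fun v => B v j)
      ((ContinuousLinearMap.proj j).comp (fderiv ℂ B w)) w := fun j =>
    (ContinuousLinearMap.proj j :
      (Fin m → ℂ) →L[ℂ] ℂ).hasFDerivAt.comp w hB.hasFDerivAt
  have hterm : ∀ i j : Fin m, HasFDerivAt
      (fun v => A v i • B v j • F.mul (S.emb v) (Pi.single i 1) (Pi.single j 1))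
      (A w i • (B w j •
          ((fderiv ℂ (fun q => F.mul q (Pi.single i 1) (Pi.single j 1)) (S.emb w)).comp
            (fderiv ℂ S.emb w))
        + ((ContinuousLinearMap.proj j).comp (fderiv ℂ B w)).smulRight
            (F.mul (S.emb w) (Pi.single i 1) (Pi.single j 1)))
      + ((ContinuousLinearMap.proj i).comp (fderiv ℂ A w)).smulRight
          (B w j • F.mul (S.emb w) (Pi.single i 1) (Pi.single j 1))) w :=
    fun i j => (hAi i).smul ((hBj j).smul (hG i j))
  have hsum : HasFDerivAt
      (fun v => ∑ i, ∑ j, A v i • B v j • F.mul (S.emb v) (Pi.single i 1) (Pi.single j 1))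
      (∑ i, ∑ j,
        (A w i • (B w j •
          ((fderiv ℂ (fun q => F.mul q (Pi.single i 1) (Pi.single j 1)) (S.emb w)).comp
            (fderiv ℂ S.emb w))
        + ((ContinuousLinearMap.proj j).comp (fderiv ℂ B w)).smulRight
            (F.mul (S.emb w) (Pi.single i 1) (Pi.single j 1)))
      + ((ContinuousLinearMap.proj i).comp (fderiv ℂ A w)).smulRight
          (B w j • F.mul (S.emb w) (Pi.single i 1) (Pi.single j 1)))) w :=
    HasFDerivAt.fun_sum (fun i _ => HasFDerivAt.fun_sum (fun j _ => hterm i j))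
  have hfun : (fun v => F.mul (S.emb v) (A v) (B v))
      = fun v => ∑ i, ∑ j, A v i • B v j • F.mul (S.emb v) (Pi.single i 1) (Pi.single j 1) :=
    funext fun v => bilin_expand (F.mul (S.emb v)) (A v) (B v)
  rw [hfun]
  refine ⟨hsum.differentiableAt, fun u => ?_⟩
  rw [hsum.fderiv]
  rw [fderiv_mulq_expand F hp (A w) (B w),
    bilin_expand (F.mul (S.emb w)) (fderiv ℂ A w u) (B w),
    bilin_expand (F.mul (S.emb w)) (A w) (fderiv ℂ B w u)]
  simp only [ContinuousLinearMap.coe_sum', Finset.sum_apply, ContinuousLinearMap.add_apply,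
    ContinuousLinearMap.coe_smul', Pi.smul_apply, ContinuousLinearMap.smulRight_apply,
    ContinuousLinearMap.coe_comp', Function.comp_apply, ContinuousLinearMap.proj_apply,
    ContinuousLinearMap.smul_apply]
  simp only [smul_add, Finset.sum_add_distrib]
  abel

end StrachanHelpers2
section StrachanHelpers3

open SubmanifoldDatum

variable {m n : ℕ} {F : FrobeniusStructure m}

private lemma star_val (S : SubmanifoldDatum m n F) (hclosed : S.ClosedUnderMul)
    {X Y : (Fin n → ℂ) → (Fin m → ℂ)} {w : Fin n → ℂ} (hw : w ∈ S.W)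
    (hx : X w ∈ S.T w) (hy : Y w ∈ S.T w) :
    S.star X Y w = F.mul (S.emb w) (X w) (Y w) :=
  S.pr_fix w hw _ (hclosed w hw _ hx _ hy)

private lemma EN_val (S : SubmanifoldDatum m n F)
    (hE : ∀ w ∈ S.W, F.E (S.emb w) ∈ S.T w) {w : Fin n → ℂ} (hw : w ∈ S.W) :
    S.EN w = F.E (S.emb w) :=
  S.pr_fix w hw _ (hE w hw)

private lemma fderiv_EN (S : SubmanifoldDatum m n F)
    (hE : ∀ w ∈ S.W, F.E (S.emb w) ∈ S.T w) {w : Fin n → ℂ} (hw : w ∈ S.W) :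
    fderiv ℂ S.EN w = (fderiv ℂ F.E (S.emb w)).comp (fderiv ℂ S.emb w) := by
  have h1 : S.EN =ᶠ[nhds w] fun v => F.E (S.emb v) :=
    Filter.eventuallyEq_of_mem (S.W_open.mem_nhds hw) (fun v hv => EN_val S hE hv)
  rw [h1.fderiv_eq]
  have hembd : DifferentiableAt ℂ S.emb w := S.emb_holo.differentiableAt (S.W_open.mem_nhds hw)
  have hEd : DifferentiableAt ℂ F.E (S.emb w) :=
    F.E_holo.differentiableAt (F.U_open.mem_nhds (S.emb_maps w hw))
  exact (hEd.hasFDerivAt.comp w hembd.hasFDerivAt).fderiv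

/-- `∇_X E_N` at `w` is `pr (DE (X w))`. -/
private lemma nabla_EN (S : SubmanifoldDatum m n F)
    (hE : ∀ w ∈ S.W, F.E (S.emb w) ∈ S.T w) {X : (Fin n → ℂ) → (Fin m → ℂ)}
    {w : Fin n → ℂ} (hw : w ∈ S.W) (hx : X w ∈ S.T w) :
    S.nabla X S.EN w = S.pr w (fderiv ℂ F.E (S.emb w) (X w)) := by
  show S.pr w (fderiv ℂ S.EN w (S.lift w (X w))) = _
  rw [fderiv_EN S hE hw]
  rw [ContinuousLinearMap.comp_apply, lift_spec S hx]

/-- The key reduction: the covariant-derivative 4-tensor of the induced structure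
equals the ambient potentiality 4-form. -/
private lemma ctensor_eq (S : SubmanifoldDatum m n F) (hclosed : S.ClosedUnderMul)
    {X' X Y Z : (Fin n → ℂ) → (Fin m → ℂ)}
    (hX' : S.IsTangentField X') (hX : S.IsTangentField X)
    (hY : S.IsTangentField Y) (hZ : S.IsTangentField Z)
    {w : Fin n → ℂ} (hw : w ∈ S.W) :
    S.ctensor X' X Y Z w
      = fderiv ℂ (fun q => F.g (F.mul q (X w) (Y w)) (Z w)) (S.emb w) (X' w) := by
  have hw' : S.W ∈ nhds w := S.W_open.mem_nhds hw
  have hp : S.emb w ∈ F.U := S.emb_maps w hw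
  have hXd : DifferentiableAt ℂ X w := hX.1.differentiableAt hw'
  have hYd : DifferentiableAt ℂ Y w := hY.1.differentiableAt hw'
  have hZd : DifferentiableAt ℂ Z w := hZ.1.differentiableAt hw'
  have hxT : X w ∈ S.T w := hX.2 w hw
  have hyT : Y w ∈ S.T w := hY.2 w hw
  have hzT : Z w ∈ S.T w := hZ.2 w hw
  have hx'T : X' w ∈ S.T w := hX'.2 w hw
  set p := S.emb w with hpdef
  set u := S.lift w (X' w) with hudef
  have hlift : fderiv ℂ S.emb w u = X' w := lift_spec S hx'T
  obtain ⟨hHdiff, hHfder⟩ := mulField_fderiv S hw hXd hYd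
  -- Step 1: replace star X Y by the ambient product in the derivative
  have hstep1 : fderiv ℂ (fun v => F.g (S.star X Y v) (Z v)) w
      = fderiv ℂ (fun v => F.g (F.mul (S.emb v) (X v) (Y v)) (Z v)) w := by
    refine Filter.EventuallyEq.fderiv_eq ?_
    refine Filter.eventuallyEq_of_mem hw' (fun v hv => ?_)
    rw [star_val S hclosed hv (hX.2 v hv) (hY.2 v hv)]
  -- Step 2: product rule for the pairing
  have hstep2 : fderiv ℂ (fun v => F.g (F.mul (S.emb v) (X v) (Y v)) (Z v)) w u
      = F.g (fderiv ℂ (fun v => F.mul (S.emb v) (X v) (Y v)) w u) (Z w)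
        + F.g (F.mul p (X w) (Y w)) (fderiv ℂ Z w u) :=
    fderiv_gpair F hHdiff hZd u
  -- cancellation identities
  have hc1 : F.g (S.star (S.nabla X' X) Y w) (Z w)
      = F.g (F.mul p (fderiv ℂ X w u) (Y w)) (Z w) := by
    have hn : S.nabla X' X w = S.pr w (fderiv ℂ X w u) := rfl
    rw [star_val S hclosed hw (by rw [hn]; exact S.pr_mem w hw _) hyT, hn,
      F.g_invariant, g_pr_left S hw _ (hclosed w hw _ hyT _ hzT), ← F.g_invariant]
  have hc2 : F.g (S.star X (S.nabla X' Y) w) (Z w)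
      = F.g (F.mul p (X w) (fderiv ℂ Y w u)) (Z w) := by
    have hn : S.nabla X' Y w = S.pr w (fderiv ℂ Y w u) := rfl
    rw [star_val S hclosed hw hxT (by rw [hn]; exact S.pr_mem w hw _), hn,
      F.mul_comm, F.g_invariant, g_pr_left S hw _ (hclosed w hw _ hxT _ hzT),
      ← F.g_invariant, F.mul_comm]
  have hc3 : F.g (S.star X Y w) (S.nabla X' Z w)
      = F.g (F.mul p (X w) (Y w)) (fderiv ℂ Z w u) := by
    have hn : S.nabla X' Z w = S.pr w (fderiv ℂ Z w u) := rfl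
    rw [star_val S hclosed hw hxT hyT, hn, F.g_symm,
      g_pr_left S hw _ (hclosed w hw _ hxT _ hyT), F.g_symm]
  -- main term
  have hmain : F.g (fderiv ℂ (fun v => F.mul (S.emb v) (X v) (Y v)) w u) (Z w)
      = fderiv ℂ (fun q => F.g (F.mul q (X w) (Y w)) (Z w)) p (X' w)
        + F.g (F.mul p (fderiv ℂ X w u) (Y w)) (Z w)
        + F.g (F.mul p (X w) (fderiv ℂ Y w u)) (Z w) := by
    rw [hHfder u, hlift, map_add, map_add, LinearMap.add_apply, LinearMap.add_apply,
      fderiv_g_mulq F hp (X w) (Y w) (Z w) (X' w)]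
  rw [SubmanifoldDatum.ctensor, hstep1, hstep2, hmain, hc1, hc2, hc3]
  ring

end StrachanHelpers3
/-- Theorem 0.5 (Strachan's sufficient condition): if the induced metric is
flat, the unit field and the Euler field are everywhere tangent to `N`, and
the tangent spaces are closed under the ambient product, then `N` is a natural
Frobenius submanifold. -/
theorem strachan {m n : ℕ} (F : FrobeniusStructure m) (S : SubmanifoldDatum m n F)
    (hflat : S.FlatInduced)
    (he : ∀ w ∈ S.W, F.e ∈ S.T w)
    (hE : ∀ w ∈ S.W, F.E (S.emb w) ∈ S.T w)
    (hclosed : S.ClosedUnderMul) :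
    S.IsNaturalFrobeniusSub := by
  refine ⟨⟨hflat, ?star_comm, ?star_assoc, ?star_unit, ?eN_flat, ?star_invariant,
    ?potential_symm, ?euler_metric, ?euler_prod⟩, hclosed⟩
  case star_comm =>
    intro X Y hX hY w hw
    show S.pr w _ = S.pr w _
    rw [F.mul_comm]
  case star_assoc =>
    intro X Y Z hX hY hZ w hw
    have h1 : S.star X Y w = F.mul (S.emb w) (X w) (Y w) :=
      star_val S hclosed hw (hX.2 w hw) (hY.2 w hw)
    have h2 : S.star Y Z w = F.mul (S.emb w) (Y w) (Z w) :=
      star_val S hclosed hw (hY.2 w hw) (hZ.2 w hw)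
    show S.pr w (F.mul (S.emb w) (S.star X Y w) (Z w))
        = S.pr w (F.mul (S.emb w) (X w) (S.star Y Z w))
    rw [h1, h2, F.mul_assoc]
  case star_unit =>
    intro X hX w hw
    have h1 : S.eN w = F.e := S.pr_fix w hw _ (he w hw)
    show S.pr w (F.mul (S.emb w) (X w) (S.eN w)) = X w
    rw [h1, F.mul_comm, F.e_unit]
    exact S.pr_fix w hw _ (hX.2 w hw)
  case eN_flat =>
    intro X hX w hw
    have h1 : S.eN =ᶠ[nhds w] fun _ => F.e :=
      Filter.eventuallyEq_of_mem (S.W_open.mem_nhds hw) (fun v hv => S.pr_fix v hv _ (he v hv))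
    have h2 : fderiv ℂ S.eN w = 0 := by
      rw [h1.fderiv_eq]; exact (hasFDerivAt_const F.e w).fderiv
    show S.pr w (fderiv ℂ S.eN w (S.lift w (X w))) = 0
    rw [h2]
    simp
  case star_invariant =>
    intro X Y Z hX hY hZ w hw
    rw [star_val S hclosed hw (hX.2 w hw) (hY.2 w hw),
      star_val S hclosed hw (hY.2 w hw) (hZ.2 w hw)]
    exact F.g_invariant (S.emb w) (X w) (Y w) (Z w)
  case potential_symm =>
    intro X' X Y Z hX' hX hY hZ w hw
    have hp : S.emb w ∈ F.U := S.emb_maps w hw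
    refine ⟨?_, ?_, ?_⟩
    · rw [ctensor_eq S hclosed hX' hX hY hZ hw, ctensor_eq S hclosed hX hX' hY hZ hw]
      exact F.potential _ hp (X' w) (X w) (Y w) (Z w)
    · rw [ctensor_eq S hclosed hX' hX hY hZ hw, ctensor_eq S hclosed hX' hY hX hZ hw]
      have : (fun q => F.g (F.mul q (X w) (Y w)) (Z w))
          = fun q => F.g (F.mul q (Y w) (X w)) (Z w) :=
        funext fun q => by rw [F.mul_comm]
      rw [this]
    · rw [ctensor_eq S hclosed hX' hX hY hZ hw, ctensor_eq S hclosed hX' hX hZ hY hw]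
      have : (fun q => F.g (F.mul q (X w) (Y w)) (Z w))
          = fun q => F.g (F.mul q (X w) (Z w)) (Y w) := by
        funext q
        rw [F.mul_comm q (X w) (Z w), F.g_invariant q (Z w) (X w) (Y w)]
        exact F.g_symm _ _
      rw [this]
  case euler_metric =>
    refine ⟨F.Dconst, fun X Y hX hY w hw => ?_⟩
    have hp : S.emb w ∈ F.U := S.emb_maps w hw
    have hxT := hX.2 w hw
    have hyT := hY.2 w hw
    rw [nabla_EN S hE hw hxT, nabla_EN S hE hw hyT,
      g_pr_left S hw _ hyT, g_pr_right S hw _ hxT]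
    exact F.euler_metric _ hp (X w) (Y w)
  case euler_prod =>
    intro X Y hX hY w hw
    have hw' : S.W ∈ nhds w := S.W_open.mem_nhds hw
    have hp : S.emb w ∈ F.U := S.emb_maps w hw
    have hXd : DifferentiableAt ℂ X w := hX.1.differentiableAt hw'
    have hYd : DifferentiableAt ℂ Y w := hY.1.differentiableAt hw'
    have hembd : DifferentiableAt ℂ S.emb w := S.emb_holo.differentiableAt hw'
    have hEd : DifferentiableAt ℂ F.E (S.emb w) :=
      F.E_holo.differentiableAt (F.U_open.mem_nhds hp)
    have hEC : DifferentiableAt ℂ (fun v => F.E (S.emb v)) w := hEd.comp w hembd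
    have hxT := hX.2 w hw
    have hyT := hY.2 w hw
    have hET : F.E (S.emb w) ∈ S.T w := hE w hw
    have hlift : fderiv ℂ S.emb w (S.lift w (X w)) = X w := lift_spec S hxT
    obtain ⟨hHdiff, hHfder⟩ := mulField_fderiv S hw hYd hEC
    have hfB : fderiv ℂ (fun v => F.E (S.emb v)) w
        = (fderiv ℂ F.E (S.emb w)).comp (fderiv ℂ S.emb w) :=
      (hEd.hasFDerivAt.comp w hembd.hasFDerivAt).fderiv
    have hstarYE : ∀ v ∈ S.W, S.star Y S.EN v = F.mul (S.emb v) (Y v) (F.E (S.emb v)) := by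
      intro v hv
      have h1 : S.EN v = F.E (S.emb v) := EN_val S hE hv
      have h2 := star_val S hclosed hv (hY.2 v hv)
        (show S.EN v ∈ S.T v by rw [h1]; exact hE v hv)
      rw [h2, h1]
    have ha1 : S.nabla X (S.star Y S.EN) w
        = S.pr w (fderiv ℂ (fun q => F.mul q (Y w) (F.E (S.emb w))) (S.emb w) (X w)
            + F.mul (S.emb w) (fderiv ℂ Y w (S.lift w (X w))) (F.E (S.emb w))
            + F.mul (S.emb w) (Y w) (fderiv ℂ F.E (S.emb w) (X w))) := by
      show S.pr w (fderiv ℂ (S.star Y S.EN) w (S.lift w (X w))) = _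
      congr 1
      rw [(Filter.eventuallyEq_of_mem hw' (fun v hv => hstarYE v hv)).fderiv_eq]
      rw [hHfder (S.lift w (X w)), hlift, hfB, ContinuousLinearMap.comp_apply, hlift]
    have hnXY : S.nabla X Y w = S.pr w (fderiv ℂ Y w (S.lift w (X w))) := rfl
    have ha2 : S.star (S.nabla X Y) S.EN w
        = F.mul (S.emb w) (S.pr w (fderiv ℂ Y w (S.lift w (X w)))) (F.E (S.emb w)) := by
      have h1 : S.EN w = F.E (S.emb w) := EN_val S hE hw
      rw [star_val S hclosed hw (show S.nabla X Y w ∈ S.T w by rw [hnXY]; exact S.pr_mem w hw _)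
        (show S.EN w ∈ S.T w by rw [h1]; exact hET), hnXY, h1]
    have hnYE : S.nabla Y S.EN w = S.pr w (fderiv ℂ F.E (S.emb w) (Y w)) :=
      nabla_EN S hE hw hyT
    have ha3 : S.star X (S.nabla Y S.EN) w
        = F.mul (S.emb w) (X w) (S.pr w (fderiv ℂ F.E (S.emb w) (Y w))) := by
      rw [star_val S hclosed hw hxT
        (show S.nabla Y S.EN w ∈ S.T w by rw [hnYE]; exact S.pr_mem w hw _), hnYE]
    have hsXY : S.star X Y w = F.mul (S.emb w) (X w) (Y w) :=
      star_val S hclosed hw hxT hyT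
    have hmulT : F.mul (S.emb w) (X w) (Y w) ∈ S.T w := hclosed w hw _ hxT _ hyT
    have ha4 : S.nabla (S.star X Y) S.EN w
        = S.pr w (fderiv ℂ F.E (S.emb w) (F.mul (S.emb w) (X w) (Y w))) := by
      have h := nabla_EN S hE (X := S.star X Y) hw
        (show S.star X Y w ∈ S.T w by rw [hsXY]; exact hmulT)
      rw [h, hsXY]
    rw [ha1, ha2, ha3, ha4, hsXY, ← sub_eq_zero]
    refine S.g_nondeg_tangent w hw _ ?_ ?_
    · refine T_sub S (T_sub S (T_add S (T_sub S ?_ ?_) ?_) ?_) ?_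
      · exact S.pr_mem w hw _
      · exact hclosed w hw _ (S.pr_mem w hw _) _ hET
      · exact hclosed w hw _ hxT _ (S.pr_mem w hw _)
      · exact S.pr_mem w hw _
      · exact hmulT
    · intro z hz
      have hzT : z ∈ S.T w := hz
      have hEulz := congrArg (fun v => F.g v z) (F.euler_prod (S.emb w) hp (X w) (Y w))
      simp only [map_sub, map_add, LinearMap.sub_apply, LinearMap.add_apply] at hEulz ⊢
      have hmulEz : F.mul (S.emb w) (F.E (S.emb w)) z ∈ S.T w := hclosed w hw _ hET _ hzT
      have hmulxz : F.mul (S.emb w) (X w) z ∈ S.T w := hclosed w hw _ hxT _ hzT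
      have hA := calc
        F.g (S.pr w (F.mul (S.emb w) (fderiv ℂ Y w (S.lift w (X w))) (F.E (S.emb w)))) z
            = F.g (F.mul (S.emb w) (fderiv ℂ Y w (S.lift w (X w))) (F.E (S.emb w))) z :=
          g_pr_left S hw _ hzT
        _ = F.g (fderiv ℂ Y w (S.lift w (X w))) (F.mul (S.emb w) (F.E (S.emb w)) z) :=
          F.g_invariant _ _ _ _
        _ = F.g (S.pr w (fderiv ℂ Y w (S.lift w (X w)))) (F.mul (S.emb w) (F.E (S.emb w)) z) :=
          (g_pr_left S hw _ hmulEz).symm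
        _ = F.g (F.mul (S.emb w) (S.pr w (fderiv ℂ Y w (S.lift w (X w)))) (F.E (S.emb w))) z :=
          (F.g_invariant _ _ _ _).symm
      have hB := calc
        F.g (S.pr w (fderiv ℂ (fun q => F.mul q (Y w) (F.E (S.emb w))) (S.emb w) (X w))) z
            = F.g (fderiv ℂ (fun q => F.mul q (Y w) (F.E (S.emb w))) (S.emb w) (X w)) z :=
          g_pr_left S hw _ hzT
        _ = fderiv ℂ (fun q => F.g (F.mul q (Y w) (F.E (S.emb w))) z) (S.emb w) (X w) :=
          (fderiv_g_mulq F hp _ _ z _).symm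
        _ = fderiv ℂ (fun q => F.g (F.mul q (X w) (F.E (S.emb w))) z) (S.emb w) (Y w) :=
          F.potential _ hp (X w) (Y w) (F.E (S.emb w)) z
        _ = fderiv ℂ (fun q => F.g (F.mul q (F.E (S.emb w)) (X w)) z) (S.emb w) (Y w) := by
          have : (fun q => F.g (F.mul q (X w) (F.E (S.emb w))) z)
              = fun q => F.g (F.mul q (F.E (S.emb w)) (X w)) z :=
            funext fun q => by rw [F.mul_comm]
          rw [this]
        _ = fderiv ℂ (fun q => F.g (F.mul q (Y w) (X w)) z) (S.emb w) (F.E (S.emb w)) :=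
          F.potential _ hp (Y w) (F.E (S.emb w)) (X w) z
        _ = fderiv ℂ (fun q => F.g (F.mul q (X w) (Y w)) z) (S.emb w) (F.E (S.emb w)) := by
          have : (fun q => F.g (F.mul q (Y w) (X w)) z)
              = fun q => F.g (F.mul q (X w) (Y w)) z :=
            funext fun q => by rw [F.mul_comm]
          rw [this]
        _ = F.g (fderiv ℂ (fun q => F.mul q (X w) (Y w)) (S.emb w) (F.E (S.emb w))) z :=
          fderiv_g_mulq F hp _ _ z _
      have hC := calc
        F.g (S.pr w (F.mul (S.emb w) (Y w) (fderiv ℂ F.E (S.emb w) (X w)))) z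
            = F.g (F.mul (S.emb w) (Y w) (fderiv ℂ F.E (S.emb w) (X w))) z :=
          g_pr_left S hw _ hzT
        _ = F.g (F.mul (S.emb w) (fderiv ℂ F.E (S.emb w) (X w)) (Y w)) z := by
          rw [F.mul_comm]
      have hD := calc
        F.g (F.mul (S.emb w) (X w) (S.pr w (fderiv ℂ F.E (S.emb w) (Y w)))) z
            = F.g (F.mul (S.emb w) (S.pr w (fderiv ℂ F.E (S.emb w) (Y w))) (X w)) z := by
          rw [F.mul_comm]
        _ = F.g (S.pr w (fderiv ℂ F.E (S.emb w) (Y w))) (F.mul (S.emb w) (X w) z) :=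
          F.g_invariant _ _ _ _
        _ = F.g (fderiv ℂ F.E (S.emb w) (Y w)) (F.mul (S.emb w) (X w) z) :=
          g_pr_left S hw _ hmulxz
        _ = F.g (F.mul (S.emb w) (fderiv ℂ F.E (S.emb w) (Y w)) (X w)) z :=
          (F.g_invariant _ _ _ _).symm
        _ = F.g (F.mul (S.emb w) (X w) (fderiv ℂ F.E (S.emb w) (Y w))) z := by
          rw [F.mul_comm]
      have hE' : F.g (S.pr w (fderiv ℂ F.E (S.emb w) (F.mul (S.emb w) (X w) (Y w)))) z
          = F.g (fderiv ℂ F.E (S.emb w) (F.mul (S.emb w) (X w) (Y w))) z :=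
        g_pr_left S hw _ hzT
      linear_combination hB + hA + hC + hD - hE' + hEulz
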